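/- arXiv:2512.03141 — 2 statements merged into one kernel-verified Lean document; each statement's English description precedes it below -/
import Mathlib

section
/- For any quaternion q with nonzero imaginary part, the conjugacy class {u * q * u⁻¹ : u a nonzero quaternion} equals the set of quaternions with the same real part and the same norm as q. -/
open scoped Quaternion

private lemma re_mul_comm (a b : ℍ[ℝ]) : (a * b).re = (b * a).re := by
  simp [Quaternion.re_mul]; ring

private lemma eq_conj_of_mul_eq (q x u : ℍ[ℝ]) (hu : u ≠ 0) (h : x * u = u * q) :
    x = u * q * u⁻¹ := by
  rw [← h, mul_inv_cancel_right₀ hu]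

theorem quaternion_conjugacy_class (q : ℍ[ℝ]) (hq : q ≠ ((q.re : ℝ) : ℍ[ℝ])) :
    {x : ℍ[ℝ] | ∃ u : ℍ[ℝ], u ≠ 0 ∧ x = u * q * u⁻¹} =
      {x : ℍ[ℝ] | x.re = q.re ∧ ‖x‖ = ‖q‖} := by
  ext x
  simp only [Set.mem_setOf_eq]
  constructor
  · rintro ⟨u, hu, rfl⟩
    have hnu : ‖u‖ ≠ 0 := norm_ne_zero_iff.mpr hu
    constructor
    · rw [mul_assoc, re_mul_comm, mul_assoc, inv_mul_cancel₀ hu, mul_one]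
    · rw [norm_mul, norm_mul, norm_inv]
      field_simp
  · rintro ⟨hre, hnorm⟩
    have hns : Quaternion.normSq x = Quaternion.normSq q := by
      rw [Quaternion.normSq_eq_norm_mul_self, Quaternion.normSq_eq_norm_mul_self, hnorm]
    have hC : x.imI ^ 2 + x.imJ ^ 2 + x.imK ^ 2 = q.imI ^ 2 + q.imJ ^ 2 + q.imK ^ 2 := by
      rw [Quaternion.normSq_def', Quaternion.normSq_def', hre] at hns
      linarith
    by_cases h0 : x.imI = -q.imI ∧ x.imJ = -q.imJ ∧ x.imK = -q.imK
    · -- x = star q; conjugate by a pure quaternion orthogonal to im q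
      obtain ⟨h1, h2, h3⟩ := h0
      have him : ¬(q.imI = 0 ∧ q.imJ = 0 ∧ q.imK = 0) := by
        intro ⟨a, b, c⟩
        exact hq (by ext <;> simp [a, b, c])
      by_cases hij : q.imI = 0 ∧ q.imJ = 0
      · -- imK ≠ 0, use u = i
        obtain ⟨ha, hb⟩ := hij
        have hu : (⟨0, 1, 0, 0⟩ : ℍ[ℝ]) ≠ 0 := by
          intro h
          simpa using congrArg QuaternionAlgebra.imI h
        refine ⟨⟨0, 1, 0, 0⟩, hu, eq_conj_of_mul_eq _ _ _ hu ?_⟩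
        apply Quaternion.ext
        · erw [Quaternion.re_mul, Quaternion.re_mul]
          simp only [hre, h1, h2, h3, ha, hb] <;> ring
        · erw [Quaternion.imI_mul, Quaternion.imI_mul]
          simp only [hre, h1, h2, h3, ha, hb] <;> ring
        · erw [Quaternion.imJ_mul, Quaternion.imJ_mul]
          simp only [hre, h1, h2, h3, ha, hb] <;> ring
        · erw [Quaternion.imK_mul, Quaternion.imK_mul]
          simp only [hre, h1, h2, h3, ha, hb] <;> ring
      · -- (imI, imJ) ≠ 0, use u = ⟨0, qJ, -qI, 0⟩
        have hu : (⟨0, q.imJ, -q.imI, 0⟩ : ℍ[ℝ]) ≠ 0 := by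
          intro h
          exact hij ⟨by simpa using congrArg QuaternionAlgebra.imJ h,
            by simpa using congrArg QuaternionAlgebra.imI h⟩
        refine ⟨⟨0, q.imJ, -q.imI, 0⟩, hu, eq_conj_of_mul_eq _ _ _ hu ?_⟩
        apply Quaternion.ext
        · erw [Quaternion.re_mul, Quaternion.re_mul]
          simp only [hre, h1, h2, h3] <;> ring
        · erw [Quaternion.imI_mul, Quaternion.imI_mul]
          simp only [hre, h1, h2, h3] <;> ring
        · erw [Quaternion.imJ_mul, Quaternion.imJ_mul]
          simp only [hre, h1, h2, h3] <;> ring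
        · erw [Quaternion.imK_mul, Quaternion.imK_mul]
          simp only [hre, h1, h2, h3] <;> ring
    · -- u = im x + im q
      have hu : (⟨0, x.imI + q.imI, x.imJ + q.imJ, x.imK + q.imK⟩ : ℍ[ℝ]) ≠ 0 := by
        intro h
        refine h0 ⟨?_, ?_, ?_⟩
        · have := congrArg QuaternionAlgebra.imI h; simp at this; linarith
        · have := congrArg QuaternionAlgebra.imJ h; simp at this; linarith
        · have := congrArg QuaternionAlgebra.imK h; simp at this; linarith
      refine ⟨_, hu, eq_conj_of_mul_eq _ _ _ hu ?_⟩
      apply Quaternion.ext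
      · erw [Quaternion.re_mul, Quaternion.re_mul]
        simp only [hre] <;> linarith [hC]
      · erw [Quaternion.imI_mul, Quaternion.imI_mul]
        simp only [hre] <;> linarith [hC]
      · erw [Quaternion.imJ_mul, Quaternion.imJ_mul]
        simp only [hre] <;> linarith [hC]
      · erw [Quaternion.imK_mul, Quaternion.imK_mul]
        simp only [hre] <;> linarith [hC]
end

section
/- If all coefficients of a polynomial P over the quaternions lie in the subalgebra ℂ = ℝ⟨i⟩ (spanned by 1 and i), and q₀ is a root of P whose minimal central quadratic does not divide P, then q₀ lies in ℝ⟨1, i⟩. -/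
open scoped Quaternion
open Polynomial

namespace AlignAux

noncomputable section

abbrev qi : ℍ[ℝ] := ⟨0, 1, 0, 0⟩

abbrev 𝔸 : Subalgebra ℝ ℍ[ℝ] := Algebra.adjoin ℝ ({qi} : Set ℍ[ℝ])

def Cplx : Subalgebra ℝ ℍ[ℝ] where
  carrier := {q | q.imJ = 0 ∧ q.imK = 0}
  add_mem' := by
    rintro a b ⟨h1, h2⟩ ⟨h3, h4⟩
    constructor <;> simp_all [Quaternion.imJ_add, Quaternion.imK_add]
  mul_mem' := by
    rintro a b ⟨h1, h2⟩ ⟨h3, h4⟩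
    constructor <;> simp_all [Quaternion.imJ_mul, Quaternion.imK_mul]
  algebraMap_mem' := fun r => ⟨Quaternion.imJ_coe r, Quaternion.imK_coe r⟩

lemma mem_adjoin_iff (q : ℍ[ℝ]) :
    q ∈ 𝔸 ↔ q.imJ = 0 ∧ q.imK = 0 := by
  constructor
  · intro h
    exact Algebra.adjoin_le (show ({qi} : Set ℍ[ℝ]) ⊆ Cplx by
      rintro x rfl; exact ⟨rfl, rfl⟩) h
  · rintro ⟨h1, h2⟩
    have hq : q = ((q.re : ℝ) : ℍ[ℝ]) + ((q.imI : ℝ) : ℍ[ℝ]) * qi := by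
      ext <;> simp [h1, h2, Quaternion.re_mul, Quaternion.imI_mul, Quaternion.imJ_mul,
        Quaternion.imK_mul]
    rw [hq]
    exact Subalgebra.add_mem _ (Subalgebra.algebraMap_mem _ q.re)
      (Subalgebra.mul_mem _ (Subalgebra.algebraMap_mem _ q.imI) (Algebra.subset_adjoin rfl))

lemma quad (q : ℍ[ℝ]) :
    q ^ 2 - ((2 * q.re : ℝ) : ℍ[ℝ]) * q + ((‖q‖ ^ 2 : ℝ) : ℍ[ℝ]) = 0 := by
  have hn : (‖q‖ ^ 2 : ℝ) = Quaternion.normSq q := by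
    rw [sq, ← Quaternion.normSq_eq_norm_mul_self]
  rw [hn]
  ext <;>
    simp [pow_two, Quaternion.normSq_def', Quaternion.re_mul, Quaternion.imI_mul,
      Quaternion.imJ_mul, Quaternion.imK_mul] <;> ring

lemma c'_monic (r s : ℝ) :
    (X ^ 2 - C (algebraMap ℝ 𝔸 r) * X + C (algebraMap ℝ 𝔸 s)).Monic := by
  monicity!

lemma c'_deg (r s : ℝ) :
    (X ^ 2 - C (algebraMap ℝ 𝔸 r) * X + C (algebraMap ℝ 𝔸 s)).degree = 2 := by
  haveI : NeZero (1 : 𝔸) := ⟨fun h => one_ne_zero (α := ℍ[ℝ]) (congrArg Subtype.val h)⟩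
  compute_degree! <;> exact one_ne_zero

lemma wb_le_one {d : WithBot ℕ} (h : d < 2) : d ≤ 1 := by
  rcases d with _ | n
  · exact bot_le
  · have hn : (n : ℕ) < 2 := by exact_mod_cast (show ((n : ℕ) : WithBot ℕ) < 2 from h)
    show ((n : ℕ) : WithBot ℕ) ≤ 1
    exact_mod_cast Nat.lt_succ_iff.mp hn

set_option maxHeartbeats 1000000 in
set_option synthInstance.maxHeartbeats 400000 in
theorem main
    (P : Polynomial ℍ[ℝ])
    (hcoeff : ∀ n, P.coeff n ∈ 𝔸)
    (q₀ : ℍ[ℝ]) (hroot : P.eval q₀ = 0)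
    (hnodvd : ¬ (X ^ 2 - C (((2 * q₀.re : ℝ)) : ℍ[ℝ]) * X + C ((‖q₀‖ ^ 2 : ℝ) : ℍ[ℝ])) ∣ P) :
    q₀ ∈ 𝔸 := by
  classical
  set f : 𝔸 →+* ℍ[ℝ] := 𝔸.val.toRingHom with hf
  have hfc : ∀ r : ℝ, f (algebraMap ℝ 𝔸 r) = (r : ℍ[ℝ]) := by
    intro r
    simpa [hf] using 𝔸.val.commutes r
  -- lift P to a polynomial over 𝔸
  set P' : Polynomial 𝔸 := ∑ n ∈ P.support, C (⟨P.coeff n, hcoeff n⟩ : 𝔸) * X ^ n with hP'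
  have hmap : P'.map f = P := by
    rw [hP', Polynomial.map_sum]
    simp only [Polynomial.map_mul, Polynomial.map_pow, map_C, map_X]
    conv_rhs => rw [P.as_sum_support]
    refine Finset.sum_congr rfl fun n _ => ?_
    rw [C_mul_X_pow_eq_monomial]
    rfl
  -- the central quadratic, over 𝔸
  set c' : Polynomial 𝔸 :=
      X ^ 2 - C (algebraMap ℝ 𝔸 (2 * q₀.re)) * X + C (algebraMap ℝ 𝔸 (‖q₀‖ ^ 2)) with hc'
  have hc'm : c'.Monic := by rw [hc']; exact c'_monic _ _
  have hdegc' : c'.degree = 2 := by rw [hc']; exact c'_deg _ _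
  -- divide
  set R' := P' %ₘ c' with hR'def
  set Q' := P' /ₘ c' with hQ'def
  have hdiv : R' + c' * Q' = P' := modByMonic_add_div P' c'
  have hdegR : R'.degree ≤ 1 := by
    have h2 := degree_modByMonic_lt P' hc'm
    rw [hdegc'] at h2
    exact wb_le_one h2
  set a : 𝔸 := R'.coeff 1 with ha
  set b : 𝔸 := R'.coeff 0 with hb
  have hRab : R' = C a * X + C b := eq_X_add_C_of_degree_le_one hdegR
  -- coefficients of c' are central after mapping
  have hcomm : ∀ k, Commute (f (c'.coeff k)) q₀ := by
    intro k
    have key : ∃ r : ℝ, c'.coeff k = algebraMap ℝ 𝔸 r := by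
      rw [hc']
      match k with
      | 0 =>
        refine ⟨‖q₀‖ ^ 2, ?_⟩
        simp only [coeff_add, coeff_sub, coeff_C_mul, coeff_X_pow, coeff_C, coeff_X]
        norm_num
      | 1 =>
        refine ⟨-(2 * q₀.re), ?_⟩
        simp only [coeff_add, coeff_sub, coeff_C_mul, coeff_X_pow, coeff_C, coeff_X]
        norm_num [map_neg]
      | 2 =>
        refine ⟨1, ?_⟩
        simp only [coeff_add, coeff_sub, coeff_C_mul, coeff_X_pow, coeff_C, coeff_X]
        norm_num [map_one]
      | (n + 3) =>
        refine ⟨0, ?_⟩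
        simp only [coeff_add, coeff_sub, coeff_C_mul, coeff_X_pow, coeff_C, coeff_X]
        norm_num [map_zero]
        omega
    obtain ⟨r, hr⟩ := key
    rw [hr, hfc]
    exact (Quaternion.coe_commute r q₀)
  -- evaluate c' at q₀
  have hevc : eval₂ f q₀ c' = 0 := by
    rw [hc']
    simp only [eval₂_add, eval₂_sub, eval₂_mul_X, eval₂_C, eval₂_X_pow, hfc]
    exact quad q₀
  -- evaluate P' at q₀
  have hevP : eval₂ f q₀ P' = 0 := by
    rw [eval₂_eq_eval_map, hmap]; exact hroot
  have hevR : eval₂ f q₀ R' = 0 := by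
    have h1 : eval₂ f q₀ (c' * Q') = 0 := by
      have hcQ : c' * Q' = Q' * c' := by
        have hco : Commute c' Q' := by
          rw [hc']
          refine Commute.add_left (Commute.sub_left ?_ ?_) ?_
          · exact ((Polynomial.commute_X Q').pow_left 2)
          · exact Commute.mul_left (by
              have h : (C (algebraMap ℝ 𝔸 (2 * q₀.re)) : Polynomial 𝔸)
                  = algebraMap ℝ (Polynomial 𝔸) (2 * q₀.re) := rfl
              rw [h]; exact Algebra.commutes _ _) (Polynomial.commute_X Q')
          · have h : (C (algebraMap ℝ 𝔸 (‖q₀‖ ^ 2)) : Polynomial 𝔸)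
                = algebraMap ℝ (Polynomial 𝔸) (‖q₀‖ ^ 2) := rfl
            rw [h]; exact Algebra.commutes _ _
        exact hco.eq
      rw [hcQ, eval₂_mul_noncomm f q₀ hcomm, hevc, mul_zero]
    have hsum := congrArg (eval₂ f q₀) hdiv
    rw [eval₂_add, h1, add_zero] at hsum
    rw [hsum, hevP]
  have heq : f a * q₀ + f b = 0 := by
    rw [hRab] at hevR
    simpa [eval₂_add, eval₂_mul_X, eval₂_C] using hevR
  -- R' ≠ 0
  have hRne : R' ≠ 0 := by
    intro h0
    apply hnodvd
    refine ⟨Q'.map f, ?_⟩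
    have hPQ : P' = c' * Q' := by rw [← hdiv, h0, zero_add]
    calc P = P'.map f := hmap.symm
      _ = (c'.map f) * (Q'.map f) := by rw [hPQ, Polynomial.map_mul]
      _ = _ := by
          rw [hc']
          simp only [Polynomial.map_add, Polynomial.map_sub, Polynomial.map_mul,
            Polynomial.map_pow, map_C, map_X, hfc]
  -- a ≠ 0
  have hane : a ≠ 0 := by
    intro h0
    apply hRne
    have hb0 : f b = 0 := by simpa [h0] using heq
    have hb0' : b = 0 := by
      apply Subtype.ext
      simpa [hf] using hb0
    rw [hRab, h0, hb0', map_zero, zero_mul, zero_add]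
  -- final: solve componentwise
  obtain ⟨huJ, huK⟩ := (mem_adjoin_iff (a : ℍ[ℝ])).mp a.2
  obtain ⟨hvJ, hvK⟩ := (mem_adjoin_iff (b : ℍ[ℝ])).mp b.2
  have hfa : f a = (a : ℍ[ℝ]) := rfl
  have hfb : f b = (b : ℍ[ℝ]) := rfl
  rw [hfa, hfb] at heq
  have hune : (a : ℍ[ℝ]) ≠ 0 := fun h => hane (Subtype.ext h)
  have hsum : (a : ℍ[ℝ]).re ^ 2 + (a : ℍ[ℝ]).imI ^ 2 ≠ 0 := by
    intro h
    apply hune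
    have h1 : (a : ℍ[ℝ]).re = 0 := by
      nlinarith [sq_nonneg (a : ℍ[ℝ]).re, sq_nonneg (a : ℍ[ℝ]).imI]
    have h2 : (a : ℍ[ℝ]).imI = 0 := by
      nlinarith [sq_nonneg (a : ℍ[ℝ]).re, sq_nonneg (a : ℍ[ℝ]).imI]
    ext <;> simp [h1, h2, huJ, huK]
  have e1 : (a : ℍ[ℝ]).re * q₀.imJ - (a : ℍ[ℝ]).imI * q₀.imK = 0 := by
    have h := congrArg QuaternionAlgebra.imJ heq
    simp only [Quaternion.imJ_add, Quaternion.imJ_mul, Quaternion.imJ_zero, huJ, huK, hvJ,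
      zero_mul, mul_zero, add_zero, zero_add] at h
    linarith
  have e2 : (a : ℍ[ℝ]).re * q₀.imK + (a : ℍ[ℝ]).imI * q₀.imJ = 0 := by
    have h := congrArg QuaternionAlgebra.imK heq
    simp only [Quaternion.imK_add, Quaternion.imK_mul, Quaternion.imK_zero, huJ, huK, hvK,
      zero_mul, mul_zero, add_zero, zero_add] at h
    linarith
  rw [mem_adjoin_iff]
  constructor
  · have hz : ((a : ℍ[ℝ]).re ^ 2 + (a : ℍ[ℝ]).imI ^ 2) * q₀.imJ = 0 := by
      linear_combination (a : ℍ[ℝ]).re * e1 + (a : ℍ[ℝ]).imI * e2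
    exact (mul_eq_zero.mp hz).resolve_left hsum
  · have hz : ((a : ℍ[ℝ]).re ^ 2 + (a : ℍ[ℝ]).imI ^ 2) * q₀.imK = 0 := by
      linear_combination (a : ℍ[ℝ]).re * e2 - (a : ℍ[ℝ]).imI * e1
    exact (mul_eq_zero.mp hz).resolve_left hsum

end

end AlignAux

theorem alignment_to_complex_subalgebra
    (P : Polynomial ℍ[ℝ])
    (hcoeff : ∀ n, P.coeff n ∈ Algebra.adjoin ℝ ({⟨0, 1, 0, 0⟩} : Set ℍ[ℝ]))
    (q₀ : ℍ[ℝ]) (hroot : P.eval q₀ = 0)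
    (hnodvd : ¬ (X ^ 2 - C (((2 * q₀.re : ℝ)) : ℍ[ℝ]) * X + C ((‖q₀‖ ^ 2 : ℝ) : ℍ[ℝ])) ∣ P) :
    q₀ ∈ Algebra.adjoin ℝ ({⟨0, 1, 0, 0⟩} : Set ℍ[ℝ]) := by
  exact AlignAux.main P hcoeff q₀ hroot hnodvd
end
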